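/- Let N,d ≥ 1 and let δ: ℝ → ℝ be differentiable on [0,∞). Fix Z₀ ∈ ℝ^{N×d} with rows z_{0,1},…,z_{0,N}, define ω_ij = δ′(‖z_{0,i} − z_{0,j}‖₂²), and define E(Z) = ‖Z − Z₀‖_F² + (1/2) Σ_{p,q} δ(‖z_p − z_q‖₂²). Then for each index i: −(1/2)·∇_{z_i} E(Z)|_{Z=Z₀} = Σ_j ω_ij (z_{0,j} − z_{0,i}). Hence the non-linear diffusion dynamics ∂z_i/∂t = Σ_j ω_ij(t)(z_j − z_i) with ω_ij(t) = δ′(‖z_i(t) − z_j(t)‖₂²) is the gradient flow of the regularized energy. -/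

import Mathlib

open Finset Matrix

/-- for a penalty `δ` differentiable on `[0,∞)` with derivative
`δ'`, the negative half-gradient of
`E(Z) = ‖Z − Z₀‖_F² + (1/2) Σ_{p,q} δ(‖z_p − z_q‖²)` with respect to the
`i`-th row at `Z = Z₀` equals `Σ_j ω_ij (z_{0,j} − z_{0,i})` with
`ω_ij = δ'(‖z_{0,i} − z_{0,j}‖²)` (stated entrywise: the partial derivative
in the `(i,c)` entry is `−2 Σ_j ω_ij (Z₀ j c − Z₀ i c)`). -/
theorem stmt_11 (N d : ℕ) (hN : 1 ≤ N) (hd : 1 ≤ d)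
    (δ δ' : ℝ → ℝ)
    (hderiv : ∀ u : ℝ, 0 ≤ u → HasDerivAt δ (δ' u) u)
    (Z₀ : Matrix (Fin N) (Fin d) ℝ) :
    ∀ (i : Fin N) (c : Fin d),
      HasDerivAt (fun t : ℝ =>
        (∑ p, ∑ c', ((Z₀ + t • Matrix.single i c 1 :
            Matrix (Fin N) (Fin d) ℝ) p c' - Z₀ p c') ^ 2)
          + (1 / 2 : ℝ) * ∑ p, ∑ q,
              δ (∑ c', ((Z₀ + t • Matrix.single i c 1 :
                  Matrix (Fin N) (Fin d) ℝ) p c'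
                - (Z₀ + t • Matrix.single i c 1 :
                  Matrix (Fin N) (Fin d) ℝ) q c') ^ 2))
        (-2 * ∑ j, δ' (∑ c', (Z₀ i c' - Z₀ j c') ^ 2) * (Z₀ j c - Z₀ i c)) 0 := by
  intro i c
  set e : Fin N → Fin d → ℝ := fun p c' => if i = p ∧ c = c' then 1 else 0 with he
  have hentry : ∀ (t : ℝ) (p : Fin N) (c' : Fin d),
      (Z₀ + t • Matrix.single i c 1 : Matrix (Fin N) (Fin d) ℝ) p c'
        = Z₀ p c' + t * e p c' := by
    intro t p c'
    simp [Matrix.single, Matrix.add_apply, Matrix.smul_apply, he, smul_eq_mul,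
      mul_ite, mul_one, mul_zero]
  simp only [hentry]
  set S : Fin N → Fin N → ℝ := fun p q => ∑ c', (Z₀ p c' - Z₀ q c') ^ 2 with hS
  set D : Fin N → Fin N → ℝ :=
    fun p q => ∑ c', 2 * (Z₀ p c' - Z₀ q c') * (e p c' - e q c') with hD
  have hSnn : ∀ p q, 0 ≤ S p q := fun p q =>
    Finset.sum_nonneg fun _ _ => sq_nonneg _
  -- first term
  have h1 : HasDerivAt (fun t : ℝ => ∑ p, ∑ c', (Z₀ p c' + t * e p c' - Z₀ p c') ^ 2)
      (0 : ℝ) 0 := by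
    have : HasDerivAt (fun t : ℝ => ∑ p, ∑ c', (Z₀ p c' + t * e p c' - Z₀ p c') ^ 2)
        (∑ p : Fin N, ∑ c' : Fin d, (0 : ℝ)) 0 := by
      apply HasDerivAt.fun_sum; intro p _
      apply HasDerivAt.fun_sum; intro c' _
      have hb : HasDerivAt (fun t : ℝ => Z₀ p c' + t * e p c' - Z₀ p c') (e p c') 0 := by
        simpa using (((hasDerivAt_id (0:ℝ)).mul_const (e p c')).const_add (Z₀ p c')).sub_const
          (Z₀ p c')
      exact (hb.pow 2).congr_deriv (by simp)
    simpa using this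
  -- second term inner derivative
  have h2 : ∀ p q : Fin N,
      HasDerivAt (fun t : ℝ => ∑ c', (Z₀ p c' + t * e p c' - (Z₀ q c' + t * e q c')) ^ 2)
        (D p q) 0 := by
    intro p q
    apply HasDerivAt.fun_sum; intro c' _
    have hb : HasDerivAt (fun t : ℝ => Z₀ p c' + t * e p c' - (Z₀ q c' + t * e q c'))
        (e p c' - e q c') 0 := by
      have := (((hasDerivAt_id (0:ℝ)).mul_const (e p c')).const_add (Z₀ p c')).sub
        (((hasDerivAt_id (0:ℝ)).mul_const (e q c')).const_add (Z₀ q c'))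
      exact this.congr_deriv (by simp)
    have := hb.pow 2
    exact this.congr_deriv (by simp)
  have h3 : HasDerivAt (fun t : ℝ => (1 / 2 : ℝ) * ∑ p, ∑ q,
      δ (∑ c', (Z₀ p c' + t * e p c' - (Z₀ q c' + t * e q c')) ^ 2))
      ((1 / 2 : ℝ) * ∑ p, ∑ q, δ' (S p q) * D p q) 0 := by
    apply HasDerivAt.const_mul
    apply HasDerivAt.fun_sum; intro p _
    apply HasDerivAt.fun_sum; intro q _
    have h0 : (fun t : ℝ => ∑ c', (Z₀ p c' + t * e p c' - (Z₀ q c' + t * e q c')) ^ 2) 0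
        = S p q := by simp [hS]
    have hδ : HasDerivAt δ (δ' (S p q))
        ((fun t : ℝ => ∑ c', (Z₀ p c' + t * e p c' - (Z₀ q c' + t * e q c')) ^ 2) 0) := by
      rw [h0]; exact hderiv _ (hSnn p q)
    exact hδ.comp 0 (h2 p q)
  have hfinal := h1.add h3
  refine hfinal.congr_deriv (Eq.symm ?_)
  -- arithmetic: identify the derivative values
  have hDval : ∀ p q, D p q =
      (if i = p then 2 * (Z₀ p c - Z₀ q c) else 0)
        - (if i = q then 2 * (Z₀ p c - Z₀ q c) else 0) := by
    intro p q
    by_cases hip : i = p <;> by_cases hiq : i = q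
    · subst hip; subst hiq; simp [hD]
    · subst hip
      simp [hD, he, hiq, mul_ite, mul_one, mul_zero, Finset.sum_ite_eq]
    · subst hiq
      simp [hD, he, hip, mul_ite, mul_one, mul_zero, Finset.sum_ite_eq]
    · simp [hD, he, hip, hiq]
  have hsym : ∀ p, S p i = S i p := by
    intro p; apply Finset.sum_congr rfl; intro c' _; ring
  have hterm : ∀ p q, δ' (S p q) * D p q
      = (if i = p then δ' (S p q) * (2 * (Z₀ p c - Z₀ q c)) else 0)
        - (if i = q then δ' (S p q) * (2 * (Z₀ p c - Z₀ q c)) else 0) := by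
    intro p q
    rw [hDval]
    by_cases hip : i = p <;> by_cases hiq : i = q <;> simp [hip, hiq] <;>
      split_ifs <;> ring
  have key : (∑ p, ∑ q, δ' (S p q) * D p q)
      = ∑ j, 4 * (δ' (S i j) * (Z₀ i c - Z₀ j c)) := by
    simp only [hterm, Finset.sum_sub_distrib]
    have hA : ∀ p : Fin N,
        (∑ q, if i = p then δ' (S p q) * (2 * (Z₀ p c - Z₀ q c)) else 0)
        = if i = p then (∑ q, δ' (S p q) * (2 * (Z₀ p c - Z₀ q c))) else 0 := by
      intro p; by_cases hip : i = p <;> simp [hip]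
    simp only [hA, Finset.sum_ite_eq, Finset.mem_univ, if_true]
    rw [← Finset.sum_sub_distrib]
    apply Finset.sum_congr rfl
    intro j _
    rw [hsym j]
    ring
  rw [key, zero_add, Finset.mul_sum, Finset.mul_sum]
  apply Finset.sum_congr rfl
  intro j _
  ring
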